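/- Let p, u, v be three non-collinear points lying on a common circle with center o and radius ρ > 0 in the Euclidean plane, and let x be a point of the closed disk bounded by that circle (dist(o,x) ≤ ρ) such that x and p lie strictly on opposite sides of the line through u and v. Then ∠(u x v) ≥ π − ∠(u p v). -/

import Mathlib

open EuclideanGeometry Real

-- helper on Real.Angle
lemma abs_toReal_add_pi (θ : Real.Angle) (h0 : θ ≠ 0) (hpi : θ ≠ π) :
    |(θ + π).toReal| = π - |θ.toReal| := by
  have htle : θ.toReal ≤ π := θ.toReal_le_pi
  have htgt : -π < θ.toReal := θ.neg_pi_lt_toReal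
  have ht0 : θ.toReal ≠ 0 := fun h => h0 (Real.Angle.toReal_eq_zero_iff.1 h)
  have htp : θ.toReal ≠ π := fun h => hpi (Real.Angle.toReal_eq_pi_iff.1 h)
  have hθ : θ + (π : Real.Angle) = ((θ.toReal + π : ℝ) : Real.Angle) := by
    rw [Real.Angle.coe_add, θ.coe_toReal]
  rcases lt_or_gt_of_ne ht0 with hneg | hpos
  · have : ((θ.toReal + π : ℝ) : Real.Angle).toReal = θ.toReal + π :=
      Real.Angle.toReal_coe_eq_self_iff.2 ⟨by linarith [Real.pi_pos], by linarith⟩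
    rw [hθ, this, abs_of_pos (by linarith), abs_of_neg hneg]
    ring
  · have hlt : θ.toReal < π := lt_of_le_of_ne htle htp
    have h2 : ((θ.toReal + π : ℝ) : Real.Angle) = ((θ.toReal - π : ℝ) : Real.Angle) := by
      have : (θ.toReal + π : ℝ) = (θ.toReal - π) + 2 * π := by ring
      rw [this, Real.Angle.coe_add, Real.Angle.coe_two_pi, add_zero]
    have : ((θ.toReal - π : ℝ) : Real.Angle).toReal = θ.toReal - π :=
      Real.Angle.toReal_coe_eq_self_iff.2 ⟨by linarith, by linarith [Real.pi_pos]⟩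
    rw [hθ, h2, this, abs_of_neg (by linarith), abs_of_pos hpos]
    ring

theorem stmt_5 (p u v o x : EuclideanSpace ℝ (Fin 2)) (ρ : ℝ)
    (hρ : 0 < ρ)
    (hncol : ¬ Collinear ℝ ({p, u, v} : Set (EuclideanSpace ℝ (Fin 2))))
    (hp : dist o p = ρ) (hu : dist o u = ρ) (hv : dist o v = ρ)
    (hx : dist o x ≤ ρ)
    (hside : (affineSpan ℝ ({u, v} : Set (EuclideanSpace ℝ (Fin 2)))).SOppSide x p) :
    ∠ u x v ≥ π - ∠ u p v := by
  haveI : Fact (Module.finrank ℝ (EuclideanSpace ℝ (Fin 2)) = 2) :=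
    ⟨finrank_euclideanSpace_fin⟩
  letI : Module.Oriented ℝ (EuclideanSpace ℝ (Fin 2)) (Fin 2) :=
    ⟨Module.Basis.orientation (EuclideanSpace.basisFun (Fin 2) ℝ).toBasis⟩
  set L := affineSpan ℝ ({u, v} : Set (EuclideanSpace ℝ (Fin 2))) with hL
  have huL : u ∈ L := mem_affineSpan ℝ (by simp)
  have hvL : v ∈ L := mem_affineSpan ℝ (by simp)
  have hxL : x ∉ L := hside.left_notMem
  have hpL : p ∉ L := hside.right_notMem
  have huv : u ≠ v := by
    rintro rfl; exact hncol (by simpa using (collinear_pair ℝ p u))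
  -- the sphere
  set s : Sphere (EuclideanSpace ℝ (Fin 2)) := ⟨o, ρ⟩ with hs
  have hps : p ∈ s := EuclideanGeometry.mem_sphere.2 (by rw [dist_comm]; exact hp)
  have hus : u ∈ s := EuclideanGeometry.mem_sphere.2 (by rw [dist_comm]; exact hu)
  have hvs : v ∈ s := EuclideanGeometry.mem_sphere.2 (by rw [dist_comm]; exact hv)
  have hxs : dist x s.center ≤ s.radius := by rw [dist_comm]; exact hx
  -- the key cyclic-quadrilateral lemma
  have key : ∀ r : EuclideanSpace ℝ (Fin 2), r ∈ s → L.SOppSide r p → ∠ u r v = π - ∠ u p v := by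
    intro r hrs hopp
    have hrL : r ∉ L := hopp.left_notMem
    have hpu : p ≠ u := fun h => hpL (h ▸ huL)
    have hpv : p ≠ v := fun h => hpL (h ▸ hvL)
    have hru : r ≠ u := fun h => hrL (h ▸ huL)
    have hrv : r ≠ v := fun h => hrL (h ▸ hvL)
    have h2 : (2 : ℤ) • ∡ u p v = (2 : ℤ) • ∡ u r v :=
      Sphere.two_zsmul_oangle_eq hus hps hrs hvs hpu hpv hru hrv
    have hsign : (∡ u p v).sign = -(∡ u r v).sign :=
      AffineSubspace.SOppSide.oangle_sign_eq_neg huL hvL hopp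
    have hnsp : (∡ u p v).sign ≠ 0 := by
      rw [ne_eq, oangle_sign_eq_zero_iff_collinear]
      intro hc
      exact hncol (by rwa [Set.insert_comm] at hc)
    have hnsr : (∡ u r v).sign ≠ 0 := by
      intro h; rw [h, neg_zero] at hsign; exact hnsp hsign
    rcases Real.Angle.two_zsmul_eq_iff.1 h2 with h | h
    · exfalso
      rw [h] at hsign
      generalize (∡ u r v).sign = a at hsign hnsr
      cases a <;> simp_all
    · have hrn := Real.Angle.sign_ne_zero_iff.1 hnsr
      have h1 : ∠ u p v = |(∡ u p v).toReal| :=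
        EuclideanGeometry.angle_eq_abs_oangle_toReal hpu.symm hpv.symm
      have h2' : ∠ u r v = |(∡ u r v).toReal| :=
        EuclideanGeometry.angle_eq_abs_oangle_toReal hru.symm hrv.symm
      rw [h1, h2', h, abs_toReal_add_pi _ hrn.1 hrn.2]
      ring
  -- second intersection of line u x with the sphere
  have hxu : x ≠ u := fun h => hxL (h ▸ huL)
  set r : EuclideanSpace ℝ (Fin 2) := s.secondInter u (x -ᵥ u) with hr
  have hrs : r ∈ s := (Sphere.secondInter_mem _).2 hus
  have hwbtw : Wbtw ℝ u x r := Sphere.wbtw_secondInter hus hxs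
  -- r is not on the line L
  have hrL : r ∉ L := by
    intro hmem
    have hcol : Collinear ℝ ({r, u, v} : Set (EuclideanSpace ℝ (Fin 2))) :=
      (collinear_insert_iff_of_mem_affineSpan hmem).2 (collinear_pair ℝ u v)
    have hcos : Cospherical ({r, u, v} : Set (EuclideanSpace ℝ (Fin 2))) := by
      refine ⟨o, ρ, ?_⟩
      intro q hq
      simp only [Set.mem_insert_iff, Set.mem_singleton_iff] at hq
      rcases hq with rfl | rfl | rfl
      · simpa [EuclideanGeometry.mem_sphere, dist_comm] using hrs
      · rw [dist_comm]; exact hu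
      · rw [dist_comm]; exact hv
    have hru : r ≠ u := by
      intro heq
      rw [heq] at hwbtw
      exact hxu ((wbtw_self_iff ℝ).1 hwbtw)
    have hrv : r ≠ v := by
      intro heq
      rw [heq] at hwbtw
      exact hxL hwbtw.mem_affineSpan
    have := hcos.affineIndependent_of_ne hru hrv huv
    rw [affineIndependent_iff_not_collinear_set] at this
    exact this hcol
  -- r is strictly on the same side as x
  have hsame : L.SSameSide r x := by
    refine ⟨(hwbtw.wSameSide₂₃ huL).symm, hrL, hxL⟩
  have hopp : L.SOppSide r p := hsame.trans_sOppSide hside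
  have hkey := key r hrs hopp
  -- now the angle chase
  rcases eq_or_ne x r with hxr | hxr
  · rw [hxr]; rw [hkey]
  · have hsbtw : Sbtw ℝ u x r := ⟨hwbtw, hxu, hxr⟩
    have hxv : x ≠ v := fun h => hxL (h ▸ hvL)
    have hrv : r ≠ v := fun h => hrL (h ▸ hvL)
    have hpi : ∠ u x r = π := hsbtw.angle₁₂₃_eq_pi
    have h1 : ∠ v x u + ∠ v x r = π :=
      EuclideanGeometry.angle_add_angle_eq_pi_of_angle_eq_pi v hpi
    have h2 : ∠ v x r + ∠ x r v + ∠ r v x = π :=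
      EuclideanGeometry.angle_add_angle_add_angle_eq_pi r hxv
    have h3 : ∠ v r x = ∠ v r u :=
      EuclideanGeometry.angle_eq_angle_of_angle_eq_pi v hsbtw.symm.angle₁₂₃_eq_pi
    have h4 : ∠ r v x ≥ 0 := EuclideanGeometry.angle_nonneg _ _ _
    have hc1 : ∠ u x v = ∠ v x u := EuclideanGeometry.angle_comm _ _ _
    have hc2 : ∠ x r v = ∠ v r x := EuclideanGeometry.angle_comm _ _ _
    have hc3 : ∠ v r u = ∠ u r v := EuclideanGeometry.angle_comm _ _ _
    rw [ge_iff_le, ← hkey]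
    linarith [hc1, hc2, hc3, h3]
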